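/- The logarithmic mean $\theta_1(s,t)$ (defined as $(s-t)/(\log s - \log t)$ for $s \neq t$, and $s$ for $s = t$) is a concave function on $(0,\infty) \times (0,\infty)$. -/

import Mathlib

open Real intervalIntegral

lemma comb_pos {a b x y : ℝ} (ha : 0 ≤ a) (hb : 0 ≤ b) (hab : a + b = 1)
    (hx : 0 < x) (hy : 0 < y) : 0 < a * x + b * y := by
  have h1 : a * min x y ≤ a * x := mul_le_mul_of_nonneg_left (min_le_left _ _) ha
  have h2 : b * min x y ≤ b * y := mul_le_mul_of_nonneg_left (min_le_right _ _) hb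
  have h3 : 0 < min x y := lt_min hx hy
  nlinarith

/-- pointwise concavity of weighted geometric mean -/
lemma aux_pt {u a b s₁ t₁ s₂ t₂ : ℝ} (hu : 0 ≤ u) (hu1 : u ≤ 1)
    (hs₁ : 0 < s₁) (ht₁ : 0 < t₁) (hs₂ : 0 < s₂) (ht₂ : 0 < t₂)
    (ha : 0 ≤ a) (hb : 0 ≤ b) (hab : a + b = 1) :
    a * (s₁ ^ u * t₁ ^ (1 - u)) + b * (s₂ ^ u * t₂ ^ (1 - u)) ≤
      (a * s₁ + b * s₂) ^ u * (a * t₁ + b * t₂) ^ (1 - u) := by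
  set A := a * s₁ + b * s₂ with hAdef
  set B := a * t₁ + b * t₂ with hBdef
  have hA : 0 < A := comb_pos ha hb hab hs₁ hs₂
  have hB : 0 < B := comb_pos ha hb hab ht₁ ht₂
  have key1 : (s₁ / A) ^ u * (t₁ / B) ^ (1 - u) ≤ u * (s₁ / A) + (1 - u) * (t₁ / B) :=
    Real.geom_mean_le_arith_mean2_weighted hu (by linarith)
      (div_nonneg hs₁.le hA.le) (div_nonneg ht₁.le hB.le) (by ring)
  have key2 : (s₂ / A) ^ u * (t₂ / B) ^ (1 - u) ≤ u * (s₂ / A) + (1 - u) * (t₂ / B) :=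
    Real.geom_mean_le_arith_mean2_weighted hu (by linarith)
      (div_nonneg hs₂.le hA.le) (div_nonneg ht₂.le hB.le) (by ring)
  have e1 : s₁ ^ u * t₁ ^ (1 - u) =
      (A ^ u * B ^ (1 - u)) * ((s₁ / A) ^ u * (t₁ / B) ^ (1 - u)) := by
    rw [Real.div_rpow hs₁.le hA.le, Real.div_rpow ht₁.le hB.le]
    field_simp
  have e2 : s₂ ^ u * t₂ ^ (1 - u) =
      (A ^ u * B ^ (1 - u)) * ((s₂ / A) ^ u * (t₂ / B) ^ (1 - u)) := by
    rw [Real.div_rpow hs₂.le hA.le, Real.div_rpow ht₂.le hB.le]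
    field_simp
  have hABpos : 0 ≤ A ^ u * B ^ (1 - u) :=
    mul_nonneg (Real.rpow_nonneg hA.le _) (Real.rpow_nonneg hB.le _)
  calc a * (s₁ ^ u * t₁ ^ (1 - u)) + b * (s₂ ^ u * t₂ ^ (1 - u))
      = (A ^ u * B ^ (1 - u)) * (a * ((s₁ / A) ^ u * (t₁ / B) ^ (1 - u)) +
        b * ((s₂ / A) ^ u * (t₂ / B) ^ (1 - u))) := by rw [e1, e2]; ring
    _ ≤ (A ^ u * B ^ (1 - u)) * (a * (u * (s₁ / A) + (1 - u) * (t₁ / B)) +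
        b * (u * (s₂ / A) + (1 - u) * (t₂ / B))) := by
        apply mul_le_mul_of_nonneg_left _ hABpos
        have := mul_le_mul_of_nonneg_left key1 ha
        have := mul_le_mul_of_nonneg_left key2 hb
        linarith
    _ = A ^ u * B ^ (1 - u) := by
        have : a * (u * (s₁ / A) + (1 - u) * (t₁ / B)) +
            b * (u * (s₂ / A) + (1 - u) * (t₂ / B)) = 1 := by
          field_simp
          ring
        rw [this, mul_one]

lemma aux_integrable {s t : ℝ} (hs : 0 < s) (ht : 0 < t) :
    IntervalIntegrable (fun u : ℝ => s ^ u * t ^ (1 - u)) MeasureTheory.volume 0 1 := by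
  have : (fun u : ℝ => s ^ u * t ^ (1 - u)) =
      fun u : ℝ => Real.exp (Real.log s * u) * Real.exp (Real.log t * (1 - u)) := by
    funext u
    rw [Real.rpow_def_of_pos hs, Real.rpow_def_of_pos ht]
  rw [this]
  exact (Continuous.mul (by fun_prop) (by fun_prop)).intervalIntegrable 0 1

lemma aux_val {s t : ℝ} (hs : 0 < s) (ht : 0 < t) :
    (∫ u in (0:ℝ)..1, s ^ u * t ^ (1 - u)) =
      if s = t then s else (s - t) / (Real.log s - Real.log t) := by
  by_cases h : s = t
  · subst h
    simp only [if_true]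
    have : ∀ u : ℝ, s ^ u * s ^ (1 - u) = s := by
      intro u
      rw [← Real.rpow_add hs]
      simp
    simp only [this]
    simp
  · rw [if_neg h]
    set c := Real.log s - Real.log t with hc
    have hc0 : c ≠ 0 := by
      intro h0
      apply h
      have : Real.log s = Real.log t := by linarith [sub_eq_zero.mp h0]
      exact Real.log_injOn_pos (Set.mem_Ioi.mpr hs) (Set.mem_Ioi.mpr ht) this
    have e : ∀ u : ℝ, s ^ u * t ^ (1 - u) = t * Real.exp (u * c) := by
      intro u
      have h2 : t * Real.exp (u * c) = Real.exp (Real.log t + u * c) := by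
        rw [Real.exp_add, Real.exp_log ht]
      rw [Real.rpow_def_of_pos hs, Real.rpow_def_of_pos ht, ← Real.exp_add, h2, hc]
      congr 1
      ring
    simp only [e]
    rw [intervalIntegral.integral_const_mul]
    have : (∫ u in (0:ℝ)..1, Real.exp (u * c)) = (Real.exp c - 1) / c := by
      rw [intervalIntegral.integral_comp_mul_right (fun x => Real.exp x) hc0]
      simp [integral_exp, smul_eq_mul, div_eq_inv_mul]
    rw [this]
    have hec : Real.exp c = s / t := by
      rw [hc, Real.exp_sub, Real.exp_log hs, Real.exp_log ht]
    rw [hec]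
    field_simp

theorem stmt6 :
    ConcaveOn ℝ {q : ℝ × ℝ | 0 < q.1 ∧ 0 < q.2}
      (fun q : ℝ × ℝ =>
        if q.1 = q.2 then q.1 else (q.1 - q.2) / (Real.log q.1 - Real.log q.2)) := by
  constructor
  · have : {q : ℝ × ℝ | 0 < q.1 ∧ 0 < q.2} = Set.Ioi 0 ×ˢ Set.Ioi 0 := by
      ext q; simp [Set.mem_prod]
    rw [this]
    exact (convex_Ioi 0).prod (convex_Ioi 0)
  · rintro ⟨s₁, t₁⟩ ⟨hs₁, ht₁⟩ ⟨s₂, t₂⟩ ⟨hs₂, ht₂⟩ a b ha hb hab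
    simp only [Set.mem_setOf_eq] at hs₁ ht₁ hs₂ ht₂
    simp only [Prod.smul_mk, Prod.mk_add_mk, smul_eq_mul]
    have hA : 0 < a * s₁ + b * s₂ := comb_pos ha hb hab hs₁ hs₂
    have hB : 0 < a * t₁ + b * t₂ := comb_pos ha hb hab ht₁ ht₂
    rw [← aux_val hs₁ ht₁, ← aux_val hs₂ ht₂, ← aux_val hA hB]
    rw [← intervalIntegral.integral_const_mul, ← intervalIntegral.integral_const_mul,
      ← intervalIntegral.integral_add ((aux_integrable hs₁ ht₁).const_mul a)
        ((aux_integrable hs₂ ht₂).const_mul b)]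
    apply intervalIntegral.integral_mono_on (by norm_num)
      (((aux_integrable hs₁ ht₁).const_mul a).add ((aux_integrable hs₂ ht₂).const_mul b))
      (aux_integrable hA hB)
    intro u hu
    exact aux_pt hu.1 hu.2 hs₁ ht₁ hs₂ ht₂ ha hb hab
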